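/- Let A be a finite subset of a commutative group G, let X ⊆ A be a nonempty subset such that K = |X+A|/|X| is minimal among all nonempty subsets of A, and let A' ⊆ A with A' = ⋃_{s∈S} A'_s where each A'_s ⊆ s+X. Then |A + 2·A'| ≤ K · ∑_{s∈S} |X + A'_s|. -/

import Mathlib

open Finset Pointwise

theorem basic_lemma {G : Type*} [AddCommGroup G] [DecidableEq G]
    (A A' X : Finset G) (hXA : X ⊆ A) (hX : X.Nonempty) (K : ℝ)
    (hK : K = ((X + A).card : ℝ) / X.card)
    (hmin : ∀ Y ⊆ A, Y.Nonempty → K ≤ ((Y + A).card : ℝ) / Y.card)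
    (hA'A : A' ⊆ A)
    (S : Finset G) (As : G → Finset G)
    (hAs : ∀ s ∈ S, As s ⊆ {s} + X)
    (hcover : A' = S.biUnion As) :
    ((A + A'.image (fun b => b + b)).card : ℝ) ≤ K * ∑ s ∈ S, ((X + As s).card : ℝ) := by
  have hX0 : (0:ℝ) < X.card := by exact_mod_cast card_pos.2 hX
  -- Petridis hypothesis from minimality
  have hP : ∀ X' ⊆ X, (X + A).card * X'.card ≤ (X' + A).card * X.card := by
    intro X' hX'
    rcases X'.eq_empty_or_nonempty with rfl | hne
    · simp
    · have h1 := hmin X' (hX'.trans hXA) hne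
      rw [hK] at h1
      have hX'0 : (0:ℝ) < X'.card := by exact_mod_cast card_pos.2 hne
      rw [div_le_div_iff₀ hX0 hX'0] at h1
      exact_mod_cast h1
  have key : ∀ s, ((X + A + As s).card : ℝ) ≤ K * (X + As s).card := by
    intro s
    have h := Finset.pluennecke_petridis_inequality_add (B := A) (As s) hP
    have h2 : ((X + A + As s).card : ℝ) * X.card ≤ (X + A).card * (X + As s).card := by
      rw [add_comm (As s) X, add_right_comm X (As s) A] at h
      exact_mod_cast h
    rw [hK, div_mul_eq_mul_div, le_div_iff₀ hX0]
    linarith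
  -- subadditivity over the cover
  have step1 : (A + A'.image (fun b => b + b)).card ≤
      ∑ s ∈ S, (A + (As s).image (fun b => b + b)).card := by
    have hsub : A + A'.image (fun b => b + b) ⊆
        S.biUnion (fun s => A + (As s).image (fun b => b + b)) := by
      intro y hy
      rw [mem_add] at hy
      obtain ⟨a, ha, c, hc, rfl⟩ := hy
      rw [mem_image] at hc
      obtain ⟨b, hb, rfl⟩ := hc
      rw [hcover, mem_biUnion] at hb
      obtain ⟨s, hs, hbs⟩ := hb
      exact mem_biUnion.2 ⟨s, hs, mem_add.2 ⟨a, ha, _, mem_image_of_mem _ hbs, rfl⟩⟩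
    exact (card_le_card hsub).trans (card_biUnion_le)
  have step2 : ∀ s ∈ S, (A + (As s).image (fun b => b + b)).card ≤ (X + A + As s).card := by
    intro s hs
    have hsub : A + (As s).image (fun b => b + b) ⊆ X + A + As s + {s} := by
      intro y hy
      rw [mem_add] at hy
      obtain ⟨a, ha, c, hc, rfl⟩ := hy
      rw [mem_image] at hc
      obtain ⟨b, hb, rfl⟩ := hc
      have hbsx := hAs s hs hb
      rw [mem_add] at hbsx
      obtain ⟨s', hs', x, hx, hbx⟩ := hbsx
      rw [mem_singleton] at hs'
      have hb' : b = s + x := by rw [← hbx, hs']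
      refine mem_add.2 ⟨x + a + b, mem_add.2 ⟨x + a, mem_add.2 ⟨x, hx, a, ha, rfl⟩, b, hb, rfl⟩,
        s, mem_singleton_self s, ?_⟩
      rw [hb']; abel
    calc (A + (As s).image (fun b => b + b)).card ≤ (X + A + As s + {s}).card :=
          card_le_card hsub
      _ = (X + A + As s).card := card_add_singleton _ _
  calc ((A + A'.image (fun b => b + b)).card : ℝ)
      ≤ ∑ s ∈ S, ((A + (As s).image (fun b => b + b)).card : ℝ) := by exact_mod_cast step1
    _ ≤ ∑ s ∈ S, ((X + A + As s).card : ℝ) := by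
        apply Finset.sum_le_sum; intro s hs; exact_mod_cast step2 s hs
    _ ≤ ∑ s ∈ S, K * ((X + As s).card : ℝ) := Finset.sum_le_sum fun s _ => key s
    _ = K * ∑ s ∈ S, ((X + As s).card : ℝ) := by rw [Finset.mul_sum]
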